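/- (Erasure decoding from the symbol column distance) Let C be any (n,k,m) convolutional code over a finite field F, let j ≥ 0, and let d_j be its j-th symbol column distance. For any erasure set E ⊆ {0,…,j} with |E| ≤ d_j − 1 and any two source sequences s, s' with s[0] ≠ s'[0], there exists an index i ∈ {0,…,j} \ E with x[i] ≠ x'[i]. Hence s[0] is uniquely determined by the unerased channel symbols whenever fewer than d_j of the symbols x[0],…,x[j] are erased. -/
import Mathlib


open scoped Classical

/-- The output `x[i] = Σ_{t=0}^{m} G_tᵀ s[i−t]` of the `(n,k,m)` convolutional code with
sub-generator matrices `G_0, …, G_m`, where `s[t] := 0` for `t < 0`. -/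
noncomputable def convEnc {F : Type} [Field F] {k n m : ℕ}
    (G : Fin (m + 1) → Matrix (Fin k) (Fin n) F) (s : ℕ → Fin k → F) (i : ℕ) :
    Fin n → F :=
  ∑ t : Fin (m + 1), (if (t : ℕ) ≤ i then ((G t).transpose).mulVec (s (i - (t : ℕ))) else 0)

/-- The convolutional code is systematic: `G_0 = [I_k | 0]`. -/
def IsSystematic {F : Type} [Field F] {k n m : ℕ}
    (G : Fin (m + 1) → Matrix (Fin k) (Fin n) F) : Prop :=
  ∀ (a : Fin k) (b : Fin n), G 0 a b = if (b : ℕ) = (a : ℕ) then 1 else 0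

/-- The number of nonzero `F`-coordinates of the truncated codeword `(x[0], …, x[j])`. -/
noncomputable def wtc {F : Type} [Field F] {k n m : ℕ}
    (G : Fin (m + 1) → Matrix (Fin k) (Fin n) F) (s : ℕ → Fin k → F) (j : ℕ) : ℕ :=
  ∑ i ∈ Finset.range (j + 1),
    (Finset.univ.filter fun a : Fin n => convEnc G s i a ≠ 0).card

/-- The number of indices `i ∈ {0, …, j}` with `x[i] ≠ 0` (symbol weight of the truncated
codeword). -/
noncomputable def symwt {F : Type} [Field F] {k n m : ℕ}
    (G : Fin (m + 1) → Matrix (Fin k) (Fin n) F) (s : ℕ → Fin k → F) (j : ℕ) : ℕ :=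
  ((Finset.range (j + 1)).filter fun i => convEnc G s i ≠ 0).card

/-- A systematic convolutional code is Strongly-MDS if its `j`-th column distance
`d_j^c` (the least weight `wtc G s j` over sources with `s[0] ≠ 0`) equals
`(n−k)(j+1)+1` for all `j ∈ {0, …, m}`. -/
def IsStronglyMDS {F : Type} [Field F] {k n m : ℕ}
    (G : Fin (m + 1) → Matrix (Fin k) (Fin n) F) : Prop :=
  ∀ j ≤ m, IsLeast {w : ℕ | ∃ s : ℕ → Fin k → F, s 0 ≠ 0 ∧ wtc G s j = w}
    ((n - k) * (j + 1) + 1)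

/-- Erasure decoding from the symbol column distance: for any `(n,k,m)` convolutional code
with `j`-th symbol column distance `d`, if fewer than `d` of the symbols `x[0], …, x[j]` are
erased (`|E| ≤ d − 1`), then any two source sequences differing at time `0` produce codewords
differing at some unerased position in `{0, …, j}`; hence `s[0]` is uniquely determined by the
unerased channel symbols. -/
lemma convEnc_sub {F : Type} [Field F] {k n m : ℕ}
    (G : Fin (m + 1) → Matrix (Fin k) (Fin n) F) (s s' : ℕ → Fin k → F) (i : ℕ) :
    convEnc G (fun t => s t - s' t) i = convEnc G s i - convEnc G s' i := by
  unfold convEnc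
  rw [← Finset.sum_sub_distrib]
  refine Finset.sum_congr rfl fun t _ => ?_
  split
  · exact Matrix.mulVec_sub _ _ _
  · simp

theorem stmt9 {F : Type} [Field F] [Fintype F] {k n m : ℕ}
    (hk : 1 ≤ k) (hkn : k < n)
    (G : Fin (m + 1) → Matrix (Fin k) (Fin n) F)
    (j : ℕ) (d : ℕ)
    (hd : IsLeast {w : ℕ | ∃ s : ℕ → Fin k → F, s 0 ≠ 0 ∧ symwt G s j = w} d)
    (E : Finset ℕ) (hE : ↑E ⊆ Set.Icc 0 j) (hcard : E.card < d) :
    ∀ s s' : ℕ → Fin k → F, s 0 ≠ s' 0 →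
      ∃ i, i ≤ j ∧ i ∉ E ∧ convEnc G s i ≠ convEnc G s' i := by
  intro s s' hss
  set δ : ℕ → Fin k → F := fun t => s t - s' t with hδ
  have hδ0 : δ 0 ≠ 0 := sub_ne_zero.mpr hss
  have hmem : symwt G δ j ∈ {w : ℕ | ∃ s : ℕ → Fin k → F, s 0 ≠ 0 ∧ symwt G s j = w} :=
    ⟨δ, hδ0, rfl⟩
  have hge : d ≤ symwt G δ j := hd.2 hmem
  unfold symwt at hge
  have hlt : E.card < ((Finset.range (j + 1)).filter fun i => convEnc G δ i ≠ 0).card :=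
    lt_of_lt_of_le hcard hge
  have hns : ¬ ((Finset.range (j + 1)).filter fun i => convEnc G δ i ≠ 0) ⊆ E :=
    fun h => absurd (Finset.card_le_card h) (not_le.mpr hlt)
  obtain ⟨i, hi, hiE⟩ := Finset.not_subset.mp hns
  simp only [Finset.mem_filter, Finset.mem_range] at hi
  refine ⟨i, Nat.lt_succ_iff.mp hi.1, hiE, ?_⟩
  intro h
  apply hi.2
  have := convEnc_sub G s s' i
  rw [h] at this
  simpa using this
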